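/- If P is absolutely continuous with respect to Lebesgue measure on ℝ^A, then g is differentiable at every U ∈ ℝ^A, and for every a ∈ A the partial derivative satisfies ∂g/∂U_a(U) = p_a(U) (Daly–Zachary–Williams: the gradient of the expected maximum equals the vector of choice probabilities). -/

import Mathlib

open MeasureTheory

noncomputable section

variable {A : Type*} [Fintype A] [Nonempty A]

/-- The expected-maximum (social surplus) function
`g(U) = ∫ max_{a ∈ A} (U_a + ε_a) dP(ε)`. -/
def gfun (P : Measure (A → ℝ)) (U : A → ℝ) : ℝ :=
  ∫ ε, (Finset.univ.sup' Finset.univ_nonempty fun a => U a + ε a) ∂P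

/-- The choice probability `p_a(U) = P({ε : U_a + ε_a > U_b + ε_b for all b ≠ a})`. -/
def choiceProb (P : Measure (A → ℝ)) (U : A → ℝ) (a : A) : ℝ :=
  (P {ε | ∀ b, b ≠ a → U b + ε b < U a + ε a}).toReal

/-- `P` has full support: every nonempty open set has positive measure. -/
def FullSupport (P : Measure (A → ℝ)) : Prop :=
  ∀ s : Set (A → ℝ), IsOpen s → s.Nonempty → 0 < P s

/-- Ties are `P`-null at `U`: the event that the maximum of `a ↦ U_a + ε_a`
is attained at more than one alternative has probability zero. -/
def TiesNull (P : Measure (A → ℝ)) (U : A → ℝ) : Prop :=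
  P {ε | ∃ a b : A, a ≠ b ∧ (∀ c, U c + ε c ≤ U a + ε a) ∧ (∀ c, U c + ε c ≤ U b + ε b)} = 0

namespace Stmt5Aux

/-- the max function -/
abbrev mfun (U ε : A → ℝ) : ℝ := Finset.univ.sup' Finset.univ_nonempty fun a => U a + ε a

/-- strict-argmax event -/
abbrev Ea (U : A → ℝ) (a : A) : Set (A → ℝ) := {ε | ∀ b, b ≠ a → U b + ε b < U a + ε a}

/-- near-tie event -/
abbrev Tset (U : A → ℝ) (δ : ℝ) : Set (A → ℝ) :=
  {ε | ∃ a b, a ≠ b ∧ |(U a + ε a) - (U b + ε b)| ≤ δ}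

/-- exact-tie event -/
abbrev tieSet (U : A → ℝ) : Set (A → ℝ) := {ε | ∃ a b, a ≠ b ∧ U a + ε a = U b + ε b}

lemma le_mfun (U ε : A → ℝ) (a : A) : U a + ε a ≤ mfun U ε :=
  Finset.le_sup' (fun b => U b + ε b) (Finset.mem_univ a)

lemma mfun_le (U ε : A → ℝ) {c : ℝ} (h : ∀ a, U a + ε a ≤ c) : mfun U ε ≤ c :=
  Finset.sup'_le _ _ fun a _ => h a

lemma abs_apply_le_norm (W : A → ℝ) (a : A) : |W a| ≤ ‖W‖ := by
  simpa [Real.norm_eq_abs] using norm_le_pi_norm W a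

lemma abs_mfun_sub_le (U V ε : A → ℝ) : |mfun V ε - mfun U ε| ≤ ‖V - U‖ := by
  have key : ∀ U V : A → ℝ, mfun V ε - mfun U ε ≤ ‖V - U‖ := by
    intro U V
    have : mfun V ε ≤ mfun U ε + ‖V - U‖ := by
      apply mfun_le
      intro a
      have h1 : V a + ε a ≤ U a + ε a + |V a - U a| := by
        have := le_abs_self (V a - U a); linarith
      have h2 : |V a - U a| ≤ ‖V - U‖ := by
        simpa using abs_apply_le_norm (V - U) a
      calc V a + ε a ≤ U a + ε a + ‖V - U‖ := by linarith
        _ ≤ mfun U ε + ‖V - U‖ := by linarith [le_mfun U ε a]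
    linarith
  have h1 := key U V
  have h2 := key V U
  rw [abs_sub_le_iff]
  constructor
  · exact h1
  · calc mfun U ε - mfun V ε ≤ ‖U - V‖ := h2
      _ = ‖V - U‖ := norm_sub_rev _ _
  
lemma continuous_mfun (U : A → ℝ) : Continuous (mfun U) := by
  exact Continuous.finset_sup'_apply Finset.univ_nonempty
    (fun a _ => continuous_const.add (continuous_apply a))

lemma integrable_mfun (P : Measure (A → ℝ)) [IsProbabilityMeasure P]
    (hint : Integrable (fun ε : A → ℝ =>
      Finset.univ.sup' Finset.univ_nonempty fun a => |ε a|) P) (U : A → ℝ) :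
    Integrable (mfun U) P := by
  set C : ℝ := Finset.univ.sup' Finset.univ_nonempty fun a => |U a| with hC
  have hCle : ∀ a : A, |U a| ≤ C := fun a => Finset.le_sup' (fun b => |U b|) (Finset.mem_univ a)
  apply Integrable.mono' ((integrable_const C).add hint)
    (continuous_mfun U).aestronglyMeasurable
  filter_upwards with ε
  have hεle : ∀ a : A, |ε a| ≤ Finset.univ.sup' Finset.univ_nonempty fun a => |ε a| :=
    fun a => Finset.le_sup' (fun b => |ε b|) (Finset.mem_univ a)
  rw [Real.norm_eq_abs, abs_le]
  constructor
  · have a0 : A := Classical.arbitrary A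
    have h1 := le_mfun U ε a0
    have h2 := abs_le.1 (hCle a0)
    have h3 := abs_le.1 (hεle a0)
    simp only [Pi.add_apply]
    linarith
  · simp only [Pi.add_apply]
    apply mfun_le
    intro a
    have h2 := abs_le.1 (hCle a)
    have h3 := abs_le.1 (hεle a)
    linarith

lemma measurableSet_Ea [DecidableEq A] (U : A → ℝ) (a : A) : MeasurableSet (Ea U a) := by
  have : Ea U a = ⋂ b, {ε : A → ℝ | b ≠ a → U b + ε b < U a + ε a} := by
    ext ε; simp [Ea, Set.mem_iInter]
  rw [this]
  apply MeasurableSet.iInter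
  intro b
  by_cases hb : b = a
  · simp [hb]
  · have : {ε : A → ℝ | b ≠ a → U b + ε b < U a + ε a}
        = {ε : A → ℝ | U b + ε b < U a + ε a} := by
      ext ε; simp [hb]
    rw [this]
    exact measurableSet_lt (measurable_const.add (measurable_pi_apply b))
      (measurable_const.add (measurable_pi_apply a))

lemma measurableSet_Tset (U : A → ℝ) (δ : ℝ) : MeasurableSet (Tset U δ) := by
  have : Tset U δ = ⋃ a, ⋃ b, {ε : A → ℝ | a ≠ b ∧ |(U a + ε a) - (U b + ε b)| ≤ δ} := by
    ext ε; simp [Tset]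
  rw [this]
  apply MeasurableSet.iUnion; intro a
  apply MeasurableSet.iUnion; intro b
  by_cases hab : a = b
  · simp [hab]
  · have : {ε : A → ℝ | a ≠ b ∧ |(U a + ε a) - (U b + ε b)| ≤ δ}
        = {ε : A → ℝ | |(U a + ε a) - (U b + ε b)| ≤ δ} := by
      ext ε; simp [hab]
    rw [this]
    apply measurableSet_le _ measurable_const
    exact ((measurable_const.add (measurable_pi_apply a)).sub
      (measurable_const.add (measurable_pi_apply b))).abs

lemma pairwise_disjoint_Ea (U : A → ℝ) :
    (Set.univ : Set A).PairwiseDisjoint (Ea U) := by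
  intro a _ b _ hab
  rw [Function.onFun, Set.disjoint_left]
  intro ε ha hb
  have h1 := ha b (Ne.symm hab)
  have h2 := hb a hab
  linarith

lemma pair_null [DecidableEq A] (U : A → ℝ) {a b : A} (hab : a ≠ b) :
    (volume : Measure (A → ℝ)) {ε | U a + ε a = U b + ε b} = 0 := by
  set f : (A → ℝ) →ₗ[ℝ] ℝ := (LinearMap.proj a : (A → ℝ) →ₗ[ℝ] ℝ) - (LinearMap.proj b : (A → ℝ) →ₗ[ℝ] ℝ) with hf
  set c : ℝ := U b - U a with hc
  set v : A → ℝ := c • (Pi.single a 1 : A → ℝ) with hv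
  have hfv : f v = c := by
    simp [hf, hv, Pi.single_apply, hab, Ne.symm hab]
  have hset : {ε : A → ℝ | U a + ε a = U b + ε b}
      = (fun x => x + (-v)) ⁻¹' (LinearMap.ker f : Set (A → ℝ)) := by
    ext ε
    simp only [Set.mem_setOf_eq, Set.mem_preimage, SetLike.mem_coe, LinearMap.mem_ker,
      map_add, map_neg, hfv]
    constructor
    · intro h
      have : f ε = c := by simp [hf, hc]; linarith
      rw [this]; ring
    · intro h
      have : f ε = c := by linarith
      simp [hf, hc] at this
      linarith
  rw [hset, measure_preimage_add_right]
  apply Measure.addHaar_submodule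
  intro htop
  have h1 : f (Pi.single a 1) = 0 := by
    rw [← LinearMap.mem_ker, htop]; trivial
  simp [hf, Pi.single_apply, hab, Ne.symm hab] at h1

lemma tieSet_null [DecidableEq A] (P : Measure (A → ℝ))
    (hac : P ≪ (volume : Measure (A → ℝ))) (U : A → ℝ) : P (tieSet U) = 0 := by
  apply hac
  have hsub : tieSet U ⊆ ⋃ p : A × A,
      {ε : A → ℝ | p.1 ≠ p.2 ∧ U p.1 + ε p.1 = U p.2 + ε p.2} := by
    intro ε ⟨a, b, hab, h⟩
    exact Set.mem_iUnion.2 ⟨(a, b), hab, h⟩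
  apply measure_mono_null hsub
  apply measure_iUnion_null
  intro p
  by_cases hp : p.1 = p.2
  · have : {ε : A → ℝ | p.1 ≠ p.2 ∧ U p.1 + ε p.1 = U p.2 + ε p.2} = ∅ := by
      ext ε; simp [hp]
    simp [this]
  · exact measure_mono_null (fun ε h => h.2) (pair_null U hp)

lemma compl_iUnion_Ea_null [DecidableEq A] (P : Measure (A → ℝ))
    (hac : P ≪ (volume : Measure (A → ℝ))) (U : A → ℝ) :
    P ((⋃ a, Ea U a)ᶜ) = 0 := by
  apply measure_mono_null _ (tieSet_null P hac U)
  intro ε hε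
  simp only [Set.mem_compl_iff, Set.mem_iUnion, not_exists] at hε
  obtain ⟨a, -, ha⟩ := Finset.exists_max_image Finset.univ (fun a => U a + ε a)
    Finset.univ_nonempty
  have := hε a
  simp only [Ea, Set.mem_setOf_eq, not_forall] at this
  obtain ⟨b, hb, hnlt⟩ := this
  exact ⟨a, b, Ne.symm hb, le_antisymm (not_lt.1 hnlt) (ha b (Finset.mem_univ b))⟩

/-- key pointwise identity off the near-tie set -/
lemma pointwise_eq [DecidableEq A] (U V : A → ℝ) {δ : ℝ} (hδ : 2 * ‖V - U‖ ≤ δ)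
    {a : A} {ε : A → ℝ} (hE : ε ∈ Ea U a) (hT : ε ∉ Tset U δ) :
    mfun V ε - mfun U ε - (V a - U a) = 0 := by
  have hgap : ∀ b, b ≠ a → U b + ε b + δ < U a + ε a := by
    intro b hb
    have h1 := hE b hb
    have h2 : ¬ |(U a + ε a) - (U b + ε b)| ≤ δ := by
      intro h
      exact hT ⟨a, b, Ne.symm hb, h⟩
    rw [not_le, abs_of_pos (by linarith)] at h2
    linarith
  have hnn : (0:ℝ) ≤ ‖V - U‖ := norm_nonneg _
  have hVU : ∀ b, |V b - U b| ≤ ‖V - U‖ := fun b => by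
    simpa using abs_apply_le_norm (V - U) b
  have hmU : mfun U ε = U a + ε a := by
    apply le_antisymm _ (le_mfun U ε a)
    apply mfun_le
    intro b
    by_cases hb : b = a
    · subst hb; exact le_rfl
    · exact le_of_lt (hE b hb)
  have hmV : mfun V ε = V a + ε a := by
    apply le_antisymm _ (le_mfun V ε a)
    apply mfun_le
    intro b
    by_cases hb : b = a
    · subst hb; exact le_rfl
    · have h1 := hgap b hb
      have h2 := abs_le.1 (hVU b)
      have h3 := abs_le.1 (hVU a)
      linarith
  rw [hmU, hmV]; ring


lemma key_estimate [DecidableEq A] (P : Measure (A → ℝ)) [IsProbabilityMeasure P]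
    (hint : Integrable (fun ε : A → ℝ =>
      Finset.univ.sup' Finset.univ_nonempty fun a => |ε a|) P)
    (hac : P ≪ (volume : Measure (A → ℝ))) (U V : A → ℝ) :
    |gfun P V - gfun P U - ∑ a, (V a - U a) * (P (Ea U a)).toReal|
      ≤ 2 * ‖V - U‖ * (P (Tset U (2 * ‖V - U‖))).toReal := by
  set δ := ‖V - U‖ with hδdef
  set T := Tset U (2 * δ) with hTdef
  have hδnn : (0:ℝ) ≤ δ := norm_nonneg _
  have hTm := measurableSet_Tset U (2 * δ)
  have hiU := integrable_mfun P hint U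
  have hiV := integrable_mfun P hint V
  have hsub : Integrable (fun ε => mfun V ε - mfun U ε) P := hiV.sub hiU
  have hgg : gfun P V - gfun P U = ∫ ε, (mfun V ε - mfun U ε) ∂P :=
    (integral_sub hiV hiU).symm
  have hunion : (⋃ a, Ea U a) =ᵐ[P] Set.univ := ae_eq_univ.2 (compl_iUnion_Ea_null P hac U)
  have hEm : ∀ a, MeasurableSet (Ea U a) := measurableSet_Ea U
  have hdisj := pairwise_disjoint_Ea U
  have split : ∀ f : (A → ℝ) → ℝ, Integrable f P →
      ∫ ε, f ε ∂P = ∑ a, ∫ ε in Ea U a, f ε ∂P := by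
    intro f hf
    rw [← setIntegral_univ (f := f), ← setIntegral_congr_set hunion]
    have h1 : (⋃ a, Ea U a) = ⋃ a ∈ Finset.univ, Ea U a := by simp
    rw [h1, integral_biUnion_finset _ (fun a _ => hEm a) ?_ (fun a _ => hf.integrableOn)]
    intro a _ b _ hab
    exact hdisj (Set.mem_univ a) (Set.mem_univ b) hab
  have hconst : ∀ a : A, (V a - U a) * (P (Ea U a)).toReal
      = ∫ _ in Ea U a, (V a - U a) ∂P := by
    intro a; rw [setIntegral_const, smul_eq_mul, mul_comm, measureReal_def]
  have hmain : gfun P V - gfun P U - ∑ a, (V a - U a) * (P (Ea U a)).toReal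
      = ∑ a, ∫ ε in Ea U a, (mfun V ε - mfun U ε - (V a - U a)) ∂P := by
    rw [hgg, split _ hsub, ← Finset.sum_sub_distrib]
    apply Finset.sum_congr rfl
    intro a _
    rw [hconst a, ← integral_sub hsub.integrableOn (integrable_const _)]
  rw [hmain]
  refine le_trans (Finset.abs_sum_le_sum_abs _ _) ?_
  have hterm : ∀ a : A, |∫ ε in Ea U a, (mfun V ε - mfun U ε - (V a - U a)) ∂P|
      ≤ 2 * δ * (P (Ea U a ∩ T)).toReal := by
    intro a
    have hiOn : Integrable (fun ε => mfun V ε - mfun U ε - (V a - U a)) P :=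
      hsub.sub (integrable_const _)
    have hsplitset : Ea U a = (Ea U a ∩ T) ∪ (Ea U a \ T) := (Set.inter_union_diff _ _).symm
    have h0 : ∫ ε in Ea U a \ T, (mfun V ε - mfun U ε - (V a - U a)) ∂P = 0 := by
      rw [setIntegral_congr_fun ((hEm a).diff hTm)
        (fun ε hε => pointwise_eq U V le_rfl hε.1 hε.2), integral_zero]
    have hIeq : ∫ ε in Ea U a, (mfun V ε - mfun U ε - (V a - U a)) ∂P
        = ∫ ε in Ea U a ∩ T, (mfun V ε - mfun U ε - (V a - U a)) ∂P := by
      conv_lhs => rw [hsplitset]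
      rw [setIntegral_union (Set.disjoint_sdiff_right.mono_left Set.inter_subset_right)
        ((hEm a).diff hTm) hiOn.integrableOn hiOn.integrableOn, h0, add_zero]
    rw [hIeq, ← Real.norm_eq_abs]
    refine norm_setIntegral_le_of_norm_le_const
      (f := fun ε => mfun V ε - mfun U ε - (V a - U a)) (measure_lt_top P _)
      ?_
    intro ε _
    rw [Real.norm_eq_abs]
    have h2 := abs_le.1 (show |V a - U a| ≤ δ by simpa using abs_apply_le_norm (V - U) a)
    have h3 := abs_le.1 (abs_mfun_sub_le U V ε)
    rw [← hδdef] at h3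
    rw [abs_le]
    constructor <;> show _ ≤ _ <;> beta_reduce <;> linarith
  refine le_trans (Finset.sum_le_sum fun a _ => hterm a) ?_
  rw [← Finset.mul_sum]
  have hsum : ∑ a : A, (P (Ea U a ∩ T)).toReal ≤ (P T).toReal := by
    rw [← ENNReal.toReal_sum (fun a _ => measure_ne_top P _)]
    apply ENNReal.toReal_mono (measure_ne_top P T)
    have : ∑ a : A, P (Ea U a ∩ T) = P (⋃ a ∈ Finset.univ, Ea U a ∩ T) := by
      rw [measure_biUnion_finset ?_ (fun a _ => (hEm a).inter hTm)]
      intro a _ b _ hab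
      exact ((hdisj (Set.mem_univ a) (Set.mem_univ b) hab).mono
        Set.inter_subset_left Set.inter_subset_left)
    rw [this]
    apply measure_mono
    simp only [Set.iUnion_subset_iff]
    intro a _
    exact Set.inter_subset_right
  have h2δ : (0:ℝ) ≤ 2 * δ := by linarith
  calc 2 * δ * ∑ a : A, (P (Ea U a ∩ T)).toReal ≤ 2 * δ * (P T).toReal := by
        exact mul_le_mul_of_nonneg_left hsum h2δ
    _ = 2 * ‖V - U‖ * (P (Tset U (2 * ‖V - U‖))).toReal := rfl


lemma Tset_small [DecidableEq A] (P : Measure (A → ℝ)) [IsProbabilityMeasure P]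
    (hac : P ≪ (volume : Measure (A → ℝ))) (U : A → ℝ) {c : ℝ} (hc : 0 < c) :
    ∃ δ : ℝ, 0 < δ ∧ (P (Tset U δ)).toReal < c := by
  set S : A × A → ℕ → Set (A → ℝ) := fun p n =>
    {ε | p.1 ≠ p.2 ∧ |(U p.1 + ε p.1) - (U p.2 + ε p.2)| ≤ 1 / (n + 1)} with hS
  have hSm : ∀ p n, MeasurableSet (S p n) := by
    intro p n
    by_cases hp : p.1 = p.2
    · have : S p n = ∅ := by ext ε; simp [hS, hp]
      rw [this]; exact MeasurableSet.empty
    · have : S p n = {ε : A → ℝ | |(U p.1 + ε p.1) - (U p.2 + ε p.2)| ≤ 1 / (n + 1)} := by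
        ext ε; simp [hS, hp]
      rw [this]
      apply measurableSet_le _ measurable_const
      exact ((measurable_const.add (measurable_pi_apply p.1)).sub
        (measurable_const.add (measurable_pi_apply p.2))).abs
  have hmono : ∀ p, Antitone (S p) := by
    intro p m n hmn ε hε
    refine ⟨hε.1, hε.2.trans ?_⟩
    apply one_div_le_one_div_of_le (by positivity)
    have : (m : ℝ) ≤ (n : ℝ) := Nat.cast_le.2 hmn
    linarith
  have hlim : ∀ p, Filter.Tendsto (fun n => P (S p n)) Filter.atTop (nhds 0) := by
    intro p
    have h := tendsto_measure_iInter_atTop (fun n => (hSm p n).nullMeasurableSet)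
      (hmono p) ⟨0, measure_ne_top P _⟩
    have hint0 : P (⋂ n, S p n) = 0 := by
      apply measure_mono_null _ (tieSet_null P hac U)
      intro ε hε
      simp only [Set.mem_iInter] at hε
      have h1 := (hε 0).1
      have h2 : U p.1 + ε p.1 = U p.2 + ε p.2 := by
        by_contra hne
        have hpos : 0 < |(U p.1 + ε p.1) - (U p.2 + ε p.2)| :=
          abs_pos.2 (sub_ne_zero.2 hne)
        obtain ⟨n, hn⟩ := exists_nat_one_div_lt hpos
        exact absurd (hε n).2 (not_le.2 hn)
      exact ⟨p.1, p.2, h1, h2⟩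
    rw [hint0] at h
    exact h
  have hsum : Filter.Tendsto (fun n => ∑ p : A × A, P (S p n)) Filter.atTop (nhds 0) := by
    have h := tendsto_finset_sum (Finset.univ : Finset (A × A)) (fun p _ => hlim p)
    simpa using h
  have hev := hsum.eventually_lt_const
    (show (0 : ENNReal) < ENNReal.ofReal c from ENNReal.ofReal_pos.2 hc)
  obtain ⟨n, hn⟩ := hev.exists
  refine ⟨1 / (n + 1), by positivity, ?_⟩
  have hsub : Tset U (1 / (n + 1)) ⊆ ⋃ p : A × A, S p n := by
    rintro ε ⟨a, b, hab, h⟩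
    exact Set.mem_iUnion.2 ⟨(a, b), hab, by exact_mod_cast h⟩
  have hle : P (Tset U (1 / (n + 1))) < ENNReal.ofReal c :=
    lt_of_le_of_lt ((measure_mono hsub).trans
      ((measure_iUnion_le _).trans (le_of_eq (tsum_fintype _)))) hn
  exact (ENNReal.lt_ofReal_iff_toReal_lt (measure_ne_top P _)).1 hle

end Stmt5Aux

open Stmt5Aux in
/-- Daly–Zachary–Williams. If `P` is absolutely continuous with respect
to Lebesgue measure on `ℝ^A`, then `g` is differentiable everywhere and its partial
derivatives are the choice probabilities: `∂g/∂U_a(U) = p_a(U)`. -/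
theorem stmt5 [DecidableEq A] (P : Measure (A → ℝ)) [IsProbabilityMeasure P]
    (hint : Integrable (fun ε : A → ℝ =>
      Finset.univ.sup' Finset.univ_nonempty fun a => |ε a|) P)
    (hac : P ≪ (volume : Measure (A → ℝ))) (U : A → ℝ) :
    DifferentiableAt ℝ (gfun P) U ∧
    ∀ a : A, fderiv ℝ (gfun P) U (Pi.single a 1) = choiceProb P U a := by
  set L : (A → ℝ) →L[ℝ] ℝ :=
    ∑ a, choiceProb P U a • (ContinuousLinearMap.proj a : (A → ℝ) →L[ℝ] ℝ) with hLdef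
  have hLapp : ∀ v : A → ℝ, L v = ∑ a, (v a) * choiceProb P U a := by
    intro v
    rw [hLdef]
    rw [ContinuousLinearMap.sum_apply]
    apply Finset.sum_congr rfl
    intro a _
    rw [ContinuousLinearMap.smul_apply, ContinuousLinearMap.proj_apply, smul_eq_mul, mul_comm]
  have hcp : ∀ a : A, choiceProb P U a = (P (Ea U a)).toReal := fun a => rfl
  have hL : HasFDerivAt (gfun P) L U := by
    rw [hasFDerivAt_iff_isLittleO]
    rw [Asymptotics.isLittleO_iff]
    intro c hc
    obtain ⟨δ, hδpos, hPδ⟩ := Tset_small P hac U (half_pos hc)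
    have hball : Metric.ball U (δ / 2) ∈ nhds U := Metric.ball_mem_nhds U (by positivity)
    filter_upwards [hball] with V hV
    have hVU : ‖V - U‖ < δ / 2 := by rwa [Metric.mem_ball, dist_eq_norm] at hV
    have hVUnn : (0:ℝ) ≤ ‖V - U‖ := norm_nonneg _
    have hkey := key_estimate P hint hac U V
    have hLVU : L (V - U) = ∑ a, (V a - U a) * (P (Ea U a)).toReal := by
      rw [hLapp]
      apply Finset.sum_congr rfl
      intro a _
      rw [hcp a, Pi.sub_apply]
    have hmono : (P (Tset U (2 * ‖V - U‖))).toReal ≤ (P (Tset U δ)).toReal := by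
      apply ENNReal.toReal_mono (measure_ne_top P _)
      apply measure_mono
      rintro ε ⟨a, b, hab, h⟩
      exact ⟨a, b, hab, h.trans (by linarith)⟩
    rw [Real.norm_eq_abs]
    calc |gfun P V - gfun P U - L (V - U)|
        ≤ 2 * ‖V - U‖ * (P (Tset U (2 * ‖V - U‖))).toReal := by rw [hLVU]; exact hkey
      _ ≤ 2 * ‖V - U‖ * (c / 2) := by
          apply mul_le_mul_of_nonneg_left (hmono.trans hPδ.le) (by linarith)
      _ = c * ‖V - U‖ := by ring
      _ ≤ c * ‖V - U‖ := le_rfl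
  refine ⟨hL.differentiableAt, fun a => ?_⟩
  rw [hL.fderiv, hLapp]
  have : ∀ b : A, (Pi.single a 1 : A → ℝ) b * choiceProb P U b
      = if b = a then choiceProb P U b else 0 := by
    intro b
    rw [Pi.single_apply]
    by_cases hb : b = a <;> simp [hb]
  rw [Finset.sum_congr rfl fun b _ => this b, Finset.sum_ite_eq']
  simp
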